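/- arXiv:1510.04497 — 4 statements merged into one kernel-verified Lean document; each statement's English description precedes it below -/
import Mathlib

section
/- In a regular category, given a commutative diagram with morphisms c₁ : C₁ → C, c₂ : C₂ → C, d₁ : D₁ → D, d₂ : D₂ → D, and vertical morphisms f₁ : C₁ → D₁, f₂ : C₂ → D₂, f : C → D satisfying f ∘ c₁ = d₁ ∘ f₁ and f ∘ c₂ = d₂ ∘ f₂, if f₁ and f₂ are regular epimorphisms and f is a monomorphism, then the induced morphism C₁ ×_C C₂ → D₁ ×_D D₂ between the pullbacks is a regular epimorphism. -/
open CategoryTheory CategoryTheory.Limits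

/-- In a regular category (finite limits, regular epis stable under pullback and
closed under composition), the induced morphism between pullbacks along a mono,
with regular-epi vertical legs, is a regular epimorphism. -/
theorem stmt0 {C : Type*} [Category C] [HasFiniteLimits C]
    (hstab : ∀ {P Q R : C} (f : P ⟶ R) (g : Q ⟶ R),
      Nonempty (RegularEpi g) → Nonempty (RegularEpi (pullback.fst f g)))
    (hcomp : ∀ {P Q R : C} (f : P ⟶ Q) (g : Q ⟶ R),
      Nonempty (RegularEpi f) → Nonempty (RegularEpi g) → Nonempty (RegularEpi (f ≫ g)))
    {C₁ C₂ Cm D₁ D₂ D : C}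
    (c₁ : C₁ ⟶ Cm) (c₂ : C₂ ⟶ Cm) (d₁ : D₁ ⟶ D) (d₂ : D₂ ⟶ D)
    (f₁ : C₁ ⟶ D₁) (f₂ : C₂ ⟶ D₂) (f : Cm ⟶ D)
    (h₁ : c₁ ≫ f = f₁ ≫ d₁) (h₂ : c₂ ≫ f = f₂ ≫ d₂)
    (hf₁ : Nonempty (RegularEpi f₁)) (hf₂ : Nonempty (RegularEpi f₂)) [Mono f] :
    Nonempty (RegularEpi (pullback.map c₁ c₂ d₁ d₂ f₁ f₂ f h₁ h₂)) := by
  -- isos and epi pieces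
  let e₀ : pullback c₁ c₂ ≅ pullback (c₁ ≫ f) (c₂ ≫ f) :=
    IsLimit.conePointUniqueUpToIso (pullbackIsPullbackOfCompMono c₁ c₂ f)
      (pullback.isLimit _ _)
  let cg : pullback (c₁ ≫ f) (c₂ ≫ f) ≅ pullback (f₁ ≫ d₁) (f₂ ≫ d₂) :=
    pullback.congrHom h₁ h₂
  let r₁ := pullbackRightPullbackFstIso d₁ (f₂ ≫ d₂) f₁
  let sy := pullbackSymmetry f₁ (pullback.fst d₁ (f₂ ≫ d₂))
  let L := pullbackLeftPullbackSndIso d₁ d₂ f₂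
  have he₀f : e₀.hom ≫ pullback.fst (c₁ ≫ f) (c₂ ≫ f) = pullback.fst c₁ c₂ :=
    IsLimit.conePointUniqueUpToIso_hom_comp _ _ WalkingCospan.left
  have he₀s : e₀.hom ≫ pullback.snd (c₁ ≫ f) (c₂ ≫ f) = pullback.snd c₁ c₂ :=
    IsLimit.conePointUniqueUpToIso_hom_comp _ _ WalkingCospan.right
  have key : pullback.map c₁ c₂ d₁ d₂ f₁ f₂ f h₁ h₂ =
      e₀.hom ≫ cg.hom ≫ r₁.inv ≫ sy.hom ≫
        pullback.fst (pullback.fst d₁ (f₂ ≫ d₂)) f₁ ≫ L.inv ≫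
        pullback.fst (pullback.snd d₁ d₂) f₂ := by
    apply pullback.hom_ext
    · simp [e₀, cg, r₁, sy, L, pullback.congrHom, pullback.map,
         he₀f,
        reassoc_of% he₀f]
      rw [pullback.lift_fst, pullback.lift_fst_assoc]
      exact ((reassoc_of% he₀f) f₁).symm
    · simp [e₀, cg, r₁, sy, L, pullback.congrHom, pullback.map, reassoc_of% he₀s]
      rw [pullback.lift_snd, pullback.lift_snd_assoc]
      exact ((reassoc_of% he₀s) f₂).symm
  rw [key]
  have iso_re : ∀ {P Q : C} (i : P ⟶ Q) [IsIso i], Nonempty (RegularEpi i) :=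
    fun i _ => ⟨IsRegularEpi.getStruct i⟩
  refine hcomp _ _ (iso_re _) (hcomp _ _ (iso_re _) (hcomp _ _ (iso_re _)
    (hcomp _ _ (iso_re _) (hcomp _ _ (hstab _ _ hf₁) (hcomp _ _ (iso_re _)
      (hstab _ _ hf₂))))))
end

section
/- Conversely, let A be a group and X, Y normal subgroups of A. If there exists a group homomorphism p : A₃ → A, where A₃ = {(a,b,c) ∈ A³ : a⁻¹b ∈ X, b⁻¹c ∈ Y}, satisfying p(a,b,b) = a for all (a,b) with a⁻¹b ∈ X and p(b,b,c) = c for all (b,c) with b⁻¹c ∈ Y, then [X,Y] = 1. -/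
/-- The commutator subgroup `[P, Q]` generated by all `p⁻¹ q⁻¹ p q`. -/
def commSub {G : Type*} [Group G] (P Q : Subgroup G) : Subgroup G :=
  Subgroup.closure {g : G | ∃ p ∈ P, ∃ q ∈ Q, g = p⁻¹ * q⁻¹ * p * q}

/-- If `X`, `Y` are normal subgroups of `A` and there is an operation `p`,
multiplicative on the subgroup `A₃ = {(a,b,c) : a⁻¹b ∈ X, b⁻¹c ∈ Y}` of `A³`,
with `p(a,b,b) = a` and `p(b,b,c) = c`, then `[X,Y] = 1`. -/
theorem stmt11 {A : Type*} [Group A] (X Y : Subgroup A) [X.Normal] [Y.Normal]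
    (p : A → A → A → A)
    (hmul : ∀ a b c a' b' c' : A, a⁻¹ * b ∈ X → b⁻¹ * c ∈ Y →
      a'⁻¹ * b' ∈ X → b'⁻¹ * c' ∈ Y →
      p (a * a') (b * b') (c * c') = p a b c * p a' b' c')
    (h1 : ∀ a b : A, a⁻¹ * b ∈ X → p a b b = a)
    (h2 : ∀ b c : A, b⁻¹ * c ∈ Y → p b b c = c) :
    commSub X Y = ⊥ := by
  have comm : ∀ x ∈ X, ∀ y ∈ Y, x * y = y * x := by
    intro x hx y hy
    have hxX : x⁻¹ * 1 ∈ X := by simpa using X.inv_mem hx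
    have hyY : (1 : A)⁻¹ * y ∈ Y := by simpa using hy
    have h1' : (1 : A)⁻¹ * 1 ∈ X := by simpa using X.one_mem
    have h1'' : (1 : A)⁻¹ * 1 ∈ Y := by simpa using Y.one_mem
    have e1 := hmul x 1 1 1 1 y hxX h1'' h1' hyY
    have e2 := hmul 1 1 y x 1 1 h1' hyY hxX h1''
    have px : p x 1 1 = x := h1 x 1 hxX
    have py : p 1 1 y = y := h2 1 y hyY
    simp only [mul_one, one_mul] at e1 e2
    rw [px, py] at e1 e2
    rw [← e1, e2]
  rw [commSub, Subgroup.closure_eq_bot_iff]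
  rintro g ⟨a, ha, b, hb, rfl⟩
  simp only [Set.mem_singleton_iff, mul_assoc, comm a ha b hb]; group
end

section
/- Let A be a group with normal subgroups X, Y, and let E = A ×_{A/X} A and F = A ×_{A/Y} A be the corresponding congruence subgroups of A × A. Then the equivalence relations E and F centralize each other in the Smith sense (admit a connector/partial Mal'tsev operation) if and only if [X,Y] = 1. -/
/-- For normal subgroups `X`, `Y` of `A`, the congruences
`E = {(a,b) : a⁻¹b ∈ X}` and `F = {(a,b) : a⁻¹b ∈ Y}` centralize each other in the
Smith sense (there is a connector, i.e. a partial Mal'tsev operation on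
`E ×_A F = {(a,b,c) : a⁻¹b ∈ X, b⁻¹c ∈ Y}`, multiplicative on this subgroup of `A³`,
with `p(a,b,b) = a` and `p(b,b,c) = c`) if and only if `[X,Y] = 1`. -/
theorem stmt12 {A : Type*} [Group A] (X Y : Subgroup A) [X.Normal] [Y.Normal] :
    (∃ p : A → A → A → A,
      (∀ a b c a' b' c' : A, a⁻¹ * b ∈ X → b⁻¹ * c ∈ Y →
        a'⁻¹ * b' ∈ X → b'⁻¹ * c' ∈ Y →
        p (a * a') (b * b') (c * c') = p a b c * p a' b' c') ∧
      (∀ a b : A, a⁻¹ * b ∈ X → p a b b = a) ∧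
      (∀ b c : A, b⁻¹ * c ∈ Y → p b b c = c)) ↔
    commSub X Y = ⊥ := by
  constructor
  · rintro ⟨p, hm, h1, h2⟩
    -- first show every x ∈ X commutes with every y ∈ Y
    have hcomm : ∀ x ∈ X, ∀ y ∈ Y, x * y = y * x := by
      intro x hx y hy
      have hx' : (x⁻¹)⁻¹ * 1 ∈ X := by simpa using hx
      have hy' : (1 : A)⁻¹ * y ∈ Y := by simpa using hy
      have e1 : p (x⁻¹ * 1) (1 * 1) (1 * y) = p x⁻¹ 1 1 * p 1 1 y :=
        hm x⁻¹ 1 1 1 1 y hx' (by simpa using Y.one_mem) (by simpa using X.one_mem) hy'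
      have e2 : p (1 * x⁻¹) (1 * 1) (y * 1) = p 1 1 y * p x⁻¹ 1 1 :=
        hm 1 1 y x⁻¹ 1 1 (by simpa using X.one_mem) hy' hx' (by simpa using Y.one_mem)
      have ha : p x⁻¹ 1 1 = x⁻¹ := h1 x⁻¹ 1 hx'
      have hb : p 1 1 y = y := h2 1 y hy'
      have : x⁻¹ * y = y * x⁻¹ := by
        have := e1.symm.trans (by simpa using e2)
        simpa [ha, hb] using this
      have hxy : Commute x⁻¹ y := this
      have := (hxy.inv_left).eq
      simpa using this
    rw [commSub, Subgroup.closure_eq_bot_iff]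
    rintro g ⟨x, hx, y, hy, rfl⟩
    have h := hcomm x hx y hy
    simp only [Set.mem_singleton_iff]
    group
    rw [zpow_neg_one, zpow_neg_one]
    calc x⁻¹ * y⁻¹ * x * y = x⁻¹ * y⁻¹ * (x * y) := by group
      _ = x⁻¹ * y⁻¹ * (y * x) := by rw [h]
      _ = 1 := by group
  · intro hbot
    have hcomm : ∀ x ∈ X, ∀ y ∈ Y, x * y = y * x := by
      intro x hx y hy
      have : x⁻¹ * y⁻¹ * x * y ∈ commSub X Y :=
        Subgroup.subset_closure ⟨x, hx, y, hy, rfl⟩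
      rw [hbot, Subgroup.mem_bot] at this
      have h1 : x * y = y * x := by
        have := congrArg (fun z => y * x * z) this
        simp only [mul_one] at this
        calc x * y = y * x * (x⁻¹ * y⁻¹ * x * y) := by group
          _ = y * x := by rw [this]
      exact h1
    refine ⟨fun a b c => a * b⁻¹ * c, ?_, ?_, ?_⟩
    · intro a b c a' b' c' hab hbc hab' hbc'
      have hu : a' * b'⁻¹ ∈ X := by
        have h1 : b'⁻¹ * a' ∈ X := by simpa using inv_mem hab'
        have := Subgroup.Normal.conj_mem ‹X.Normal› _ h1 b'
        simpa [mul_assoc] using this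
      have key : (a' * b'⁻¹) * (b⁻¹ * c) = (b⁻¹ * c) * (a' * b'⁻¹) :=
        hcomm _ hu _ hbc
      calc a * a' * (b * b')⁻¹ * (c * c')
          = a * ((a' * b'⁻¹) * (b⁻¹ * c)) * c' := by group
        _ = a * ((b⁻¹ * c) * (a' * b'⁻¹)) * c' := by rw [key]
        _ = a * b⁻¹ * c * (a' * b'⁻¹ * c') := by group
    · intro a b _; group
    · intro b c _; group
end

section
/- Let A be a group and X, Y normal subgroups. The canonical homomorphism γ₁ : (A*X) ×_A (A*Y) → A₃ = A ×_{A/X} A ×_{A/Y} A, sending a pair (u, v) to ([1,x](u), [1,0](u), [1,y](v)) where [1,x] : A*X → A and [1,y] : A*Y → A are induced by inclusions and [1,0] kills X (resp. Y), is a surjective homomorphism. -/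
open Monoid

variable {A : Type*} [Group A]

/-- The retraction `[1,0] : A ∗ X →* A` killing the subgroup `X`. -/
def retr (X : Subgroup A) : Coprod A X →* A :=
  Coprod.lift (MonoidHom.id A) (1 : X →* A)

/-- The evaluation `[1,x] : A ∗ X →* A` induced by the identity and the inclusion. -/
def eval (X : Subgroup A) : Coprod A X →* A :=
  Coprod.lift (MonoidHom.id A) X.subtype

lemma key (X : Subgroup A) [X.Normal] (u : Coprod A X) :
    (eval X u)⁻¹ * retr X u ∈ X := by
  have h : (QuotientGroup.mk' X).comp (eval X) = (QuotientGroup.mk' X).comp (retr X) := by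
    apply Coprod.hom_ext
    · rfl
    · ext x
      simp [eval, retr, QuotientGroup.eq_one_iff]
  have := congrFun (congrArg DFunLike.coe h) u
  have h2 : retr X u * (eval X u)⁻¹ ∈ X := by
    simpa [QuotientGroup.eq_iff_div_mem, div_eq_mul_inv, ← QuotientGroup.eq] using this.symm
  exact Subgroup.Normal.mem_comm ‹X.Normal› h2

/-- For normal subgroups `X`, `Y` of `A`, the canonical homomorphism
`γ₁ : (A ∗ X) ×_A (A ∗ Y) → A₃ = A ×_{A/X} A ×_{A/Y} A`,
`(u,v) ↦ ([1,x](u), [1,0](u), [1,y](v))`, is well defined (it lands in `A₃`) and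
surjective. -/
theorem stmt18 (X Y : Subgroup A) [X.Normal] [Y.Normal] :
    (∀ (u : Coprod A X) (v : Coprod A Y), retr X u = retr Y v →
      (eval X u)⁻¹ * retr X u ∈ X ∧ (retr X u)⁻¹ * eval Y v ∈ Y) ∧
    (∀ a b c : A, a⁻¹ * b ∈ X → b⁻¹ * c ∈ Y →
      ∃ (u : Coprod A X) (v : Coprod A Y),
        retr X u = retr Y v ∧ eval X u = a ∧ retr X u = b ∧ eval Y v = c) := by
  constructor
  · intro u v h
    refine ⟨key X u, ?_⟩
    rw [h]
    have := key Y v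
    have : ((eval Y v)⁻¹ * retr Y v)⁻¹ ∈ Y := Y.inv_mem this
    simpa using this
  · intro a b c hx hy
    have hx' : b⁻¹ * a ∈ X := by simpa using X.inv_mem hx
    refine ⟨Coprod.inl b * Coprod.inr ⟨b⁻¹ * a, hx'⟩,
      Coprod.inl b * Coprod.inr ⟨b⁻¹ * c, hy⟩, ?_, ?_, ?_, ?_⟩ <;>
      simp [retr, eval]
end
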